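/- Let A : [0, T] → ℝ^{V×V} be continuous with nonnegative off-diagonal entries (A(t)(v, w) ≥ 0 for all v ≠ w and all t). If x : [0, T] → ℝⱽ is differentiable, satisfies x′(t) = A(t) x(t) on [0, T], and x(0) has all components nonnegative, then x(t) has all components nonnegative for every t ∈ [0, T]. -/

import Mathlib

open Real Set Filter

/-- A linear ODE `x' = A(t) x` whose (continuous) coefficient matrices have
nonnegative off-diagonal entries (Metzler matrices) preserves nonnegativity of
the state. -/
theorem metzler_linear_ode_preserves_nonnegativity
    (V : Type*) [Fintype V] [DecidableEq V] (T : ℝ) (hT : 0 ≤ T)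
    (A : ℝ → Matrix V V ℝ)
    (hAcont : ContinuousOn A (Set.Icc 0 T))
    (hAmetzler : ∀ t ∈ Set.Icc (0 : ℝ) T, ∀ v w, v ≠ w → 0 ≤ A t v w)
    (x : ℝ → V → ℝ)
    (hx : ∀ t ∈ Set.Icc (0 : ℝ) T, HasDerivAt x ((A t).mulVec (x t)) t)
    (hx0 : ∀ v, 0 ≤ x 0 v) :
    ∀ t ∈ Set.Icc (0 : ℝ) T, ∀ v, 0 ≤ x t v := by
  -- fun_prop of entries and of x
  have hentry : ∀ v w : V, ContinuousOn (fun s => A s v w) (Set.Icc 0 T) := by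
    intro v w
    exact ((continuous_apply w).comp (continuous_apply v)).comp_continuousOn hAcont
  have hxcont : ContinuousOn x (Set.Icc 0 T) :=
    fun s hs => (hx s hs).continuousAt.continuousWithinAt
  have hxvcont : ∀ v, ContinuousOn (fun s => x s v) (Set.Icc 0 T) :=
    fun v => (continuous_apply v).comp_continuousOn hxcont
  -- a uniform bound on the entries of A
  have hgcont : ContinuousOn (fun s => ∑ p : V × V, |A s p.1 p.2|) (Set.Icc 0 T) :=
    continuousOn_finset_sum _ fun p _ => (hentry p.1 p.2).abs
  obtain ⟨C, hC⟩ := isCompact_Icc.exists_bound_of_continuousOn hgcont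
  have hCnn : 0 ≤ C := le_trans (norm_nonneg _) (hC 0 (left_mem_Icc.2 hT))
  have habs : ∀ s ∈ Set.Icc (0:ℝ) T, ∀ v w, |A s v w| ≤ C := by
    intro s hs v w
    have h1 : |A s v w| ≤ ∑ p : V × V, |A s p.1 p.2| :=
      Finset.single_le_sum (f := fun p : V × V => |A s p.1 p.2|)
        (fun p _ => abs_nonneg _) (Finset.mem_univ (v, w))
    calc |A s v w| ≤ ∑ p : V × V, |A s p.1 p.2| := h1
      _ ≤ ‖∑ p : V × V, |A s p.1 p.2|‖ := le_abs_self _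
      _ ≤ C := hC s hs
  have hrow : ∀ s ∈ Set.Icc (0:ℝ) T, ∀ v, ∑ w, A s v w ≤ C := by
    intro s hs v
    have h1 : ∑ w, A s v w ≤ ∑ w, |A s v w| :=
      Finset.sum_le_sum fun w _ => le_abs_self _
    have h2 : ∑ w, |A s v w| ≤ ∑ v' : V, ∑ w, |A s v' w| :=
      Finset.single_le_sum (f := fun v' => ∑ w, |A s v' w|)
        (fun _ _ => Finset.sum_nonneg fun _ _ => abs_nonneg _) (Finset.mem_univ v)
    have h3 : ∑ v' : V, ∑ w, |A s v' w| = ∑ p : V × V, |A s p.1 p.2| :=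
      (Fintype.sum_prod_type (fun p : V × V => |A s p.1 p.2|)).symm
    calc ∑ w, A s v w ≤ ∑ v' : V, ∑ w, |A s v' w| := h1.trans h2
      _ = ∑ p : V × V, |A s p.1 p.2| := h3
      _ ≤ ‖∑ p : V × V, |A s p.1 p.2|‖ := le_abs_self _
      _ ≤ C := hC s hs
  set K : ℝ := 2 * C + 1 with hKdef
  set y : ℝ → V → ℝ := fun s w => Real.exp (C * s) * x s w with hydef
  set f' : ℝ → V → ℝ := fun s w => C * y s w + ∑ u, A s w u * y s u with hf'def
  -- derivative of each component of y
  have hyderiv : ∀ w : V, ∀ s ∈ Set.Icc (0:ℝ) T,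
      HasDerivAt (fun r => y r w) (f' s w) s := by
    intro w s hs
    have h1 : HasDerivAt (fun r => Real.exp (C * r)) (Real.exp (C * s) * C) s := by
      simpa using ((hasDerivAt_id s).const_mul C).exp
    have h2 : HasDerivAt (fun r => x r w) ((A s).mulVec (x s) w) s :=
      hasDerivAt_pi.1 (hx s hs) w
    have h3 := h1.mul h2
    refine h3.congr_deriv ?_
    simp only [hf'def, hydef, Matrix.mulVec, dotProduct, Finset.mul_sum]
    congr 1
    · ring
    · exact Finset.sum_congr rfl fun u _ => by ring
  have hycont : ∀ w, ContinuousOn (fun s => y s w) (Set.Icc 0 T) := by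
    intro w
    exact ((Real.continuous_exp.comp (continuous_const.mul continuous_id)).continuousOn).mul
      (hxvcont w)
  have hf'cont : ∀ w, ContinuousOn (fun s => f' s w) (Set.Icc 0 T) := by
    intro w
    exact (continuousOn_const.mul (hycont w)).add
      (continuousOn_finset_sum _ fun u _ => (hentry w u).mul (hycont u))
  have hy0 : ∀ w, y 0 w = x 0 w := by intro w; simp [hydef]
  -- the key integral estimate
  have key : ∀ ε : ℝ, 0 < ε → ∀ t₁ ∈ Set.Icc (0:ℝ) T,
      (∀ s ∈ Set.Icc (0:ℝ) t₁, ∀ w, -(ε * Real.exp (K * s)) ≤ y s w) →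
      ∀ s ∈ Set.Icc (0:ℝ) t₁, ∀ w, ε ≤ y s w + ε * Real.exp (K * s) := by
    intro ε hε t₁ ht₁ hnn s hs w
    have hsT : Set.Icc (0:ℝ) s ⊆ Set.Icc 0 T :=
      Set.Icc_subset_Icc le_rfl (hs.2.trans ht₁.2)
    have h0s : (0:ℝ) ≤ s := hs.1
    have hFTC : ∫ r in (0:ℝ)..s, f' r w = y s w - y 0 w := by
      apply intervalIntegral.integral_eq_sub_of_hasDerivAt
      · intro r hr
        rw [Set.uIcc_of_le h0s] at hr
        exact hyderiv w r (hsT hr)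
      · apply ContinuousOn.intervalIntegrable
        rw [Set.uIcc_of_le h0s]
        exact (hf'cont w).mono hsT
    have hFTC2 : ∫ r in (0:ℝ)..s, K * (ε * Real.exp (K * r))
        = ε * Real.exp (K * s) - ε := by
      have hd : ∀ r ∈ Set.uIcc (0:ℝ) s,
          HasDerivAt (fun u => ε * Real.exp (K * u)) (K * (ε * Real.exp (K * r))) r := by
        intro r _
        have h := (((hasDerivAt_id r).const_mul K).exp).const_mul ε
        simp only [id_eq, mul_one] at h
        refine h.congr_deriv ?_
        ring
      rw [intervalIntegral.integral_eq_sub_of_hasDerivAt hd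
        (by apply Continuous.intervalIntegrable; fun_prop)]
      simp
    have hptwise : ∀ r ∈ Set.Icc (0:ℝ) s,
        -(K * (ε * Real.exp (K * r))) ≤ f' r w := by
      intro r hr
      have hrT : r ∈ Set.Icc (0:ℝ) T := hsT hr
      have hrt₁ : r ∈ Set.Icc (0:ℝ) t₁ := ⟨hr.1, hr.2.trans hs.2⟩
      have hm0 : 0 ≤ ε * Real.exp (K * r) := by positivity
      have hsum : f' r w = ∑ u, (A r w u + if u = w then C else 0) * y r u := by
        simp only [hf'def, add_mul, Finset.sum_add_distrib, ite_mul, zero_mul,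
          Finset.sum_ite_eq' Finset.univ w (fun u => C * y r u), Finset.mem_univ, if_true]
        ring
      have hcoef : ∀ u, 0 ≤ A r w u + if u = w then C else 0 := by
        intro u
        by_cases h : u = w
        · subst h
          rw [if_pos rfl]
          have h1 := habs r hrT u u
          have h2 := neg_abs_le (A r u u)
          linarith
        · rw [if_neg h, add_zero]
          exact hAmetzler r hrT w u (fun hwu => h hwu.symm)
      have hcsum : ∑ u, (A r w u + if u = w then C else 0) ≤ K := by
        rw [Finset.sum_add_distrib, Finset.sum_ite_eq' Finset.univ w (fun _ => C)]
        simp only [Finset.mem_univ, if_true]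
        have := hrow r hrT w
        rw [hKdef]; linarith
      have hterm : ∀ u ∈ Finset.univ,
          (A r w u + if u = w then C else 0) * (-(ε * Real.exp (K * r))) ≤ (A r w u + if u = w then C else 0) * y r u := by
        intro u _
        exact mul_le_mul_of_nonneg_left (hnn r hrt₁ u) (hcoef u)
      calc -(K * (ε * Real.exp (K * r))) = K * (-(ε * Real.exp (K * r))) := by ring
        _ ≤ (∑ u, (A r w u + if u = w then C else 0)) * (-(ε * Real.exp (K * r))) :=
            mul_le_mul_of_nonpos_right hcsum (by linarith)
        _ = ∑ u, (A r w u + if u = w then C else 0) * (-(ε * Real.exp (K * r))) :=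
            Finset.sum_mul _ _ _
        _ ≤ ∑ u, (A r w u + if u = w then C else 0) * y r u := Finset.sum_le_sum hterm
        _ = f' r w := hsum.symm
    have hmono : ∫ r in (0:ℝ)..s, -(K * (ε * Real.exp (K * r)))
        ≤ ∫ r in (0:ℝ)..s, f' r w := by
      apply intervalIntegral.integral_mono_on h0s
      · apply Continuous.intervalIntegrable; fun_prop
      · apply ContinuousOn.intervalIntegrable
        rw [Set.uIcc_of_le h0s]
        exact (hf'cont w).mono hsT
      · exact hptwise
    rw [intervalIntegral.integral_neg, hFTC2, hFTC] at hmono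
    have hx0w : 0 ≤ y 0 w := by rw [hy0]; exact hx0 w
    linarith
  -- the main nonnegativity estimate, for every ε > 0
  have main : ∀ ε : ℝ, 0 < ε → ∀ s ∈ Set.Icc (0:ℝ) T, ∀ w,
      -(ε * Real.exp (K * s)) ≤ y s w := by
    intro ε hε
    set S : Set ℝ := {r | r ∈ Set.Icc (0:ℝ) T ∧
      ∀ s ∈ Set.Icc (0:ℝ) r, ∀ w, -(ε * Real.exp (K * s)) ≤ y s w} with hSdef
    have h0S : (0:ℝ) ∈ S := by
      refine ⟨left_mem_Icc.2 hT, ?_⟩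
      intro s hs w
      have hs0 : s = 0 := le_antisymm hs.2 hs.1
      subst hs0
      have h1 : 0 ≤ y 0 w := by rw [hy0]; exact hx0 w
      have h2 : 0 < ε * Real.exp (K * 0) := by positivity
      linarith
    have hbdd : BddAbove S := ⟨T, fun r hr => hr.1.2⟩
    set τ := sSup S with hτdef
    have hτmem : τ ∈ Set.Icc (0:ℝ) T :=
      ⟨le_csSup hbdd h0S, csSup_le ⟨0, h0S⟩ fun r hr => hr.1.2⟩
    have hτnn : ∀ s ∈ Set.Icc (0:ℝ) τ, ∀ w, -(ε * Real.exp (K * s)) ≤ y s w := by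
      intro s hs w
      rcases lt_or_eq_of_le hs.2 with hlt | heq
      · obtain ⟨r, hrS, hsr⟩ := exists_lt_of_lt_csSup ⟨0, h0S⟩ hlt
        exact hrS.2 s ⟨hs.1, hsr.le⟩ w
      · rcases eq_or_lt_of_le hs.1 with h0 | h0
        · exact h0S.2 s ⟨hs.1, h0.symm.le⟩ w
        · -- s = τ > 0 : take limits from the left
          have hsT : s ∈ Set.Icc (0:ℝ) T := ⟨hs.1, heq ▸ hτmem.2⟩
          have hev : ∀ᶠ r in nhdsWithin s (Set.Iio s),
              -(ε * Real.exp (K * r)) ≤ y r w := by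
            filter_upwards [Ioo_mem_nhdsLT_of_mem (show s ∈ Set.Ioc (0:ℝ) s from ⟨h0, le_rfl⟩)]
              with r hr
            obtain ⟨r', hr'S, hrr'⟩ := exists_lt_of_lt_csSup ⟨0, h0S⟩ (heq ▸ hr.2)
            exact hr'S.2 r ⟨hr.1.le, hrr'.le⟩ w
          have h1 : Filter.Tendsto (fun r => -(ε * Real.exp (K * r)))
              (nhdsWithin s (Set.Iio s)) (nhds (-(ε * Real.exp (K * s)))) := by
            apply Filter.Tendsto.mono_left _ nhdsWithin_le_nhds
            exact (Continuous.tendsto (by fun_prop) s)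
          have h2 : Filter.Tendsto (fun r => y r w)
              (nhdsWithin s (Set.Iio s)) (nhds (y s w)) :=
            ((hyderiv w s hsT).continuousAt.tendsto).mono_left nhdsWithin_le_nhds
          exact le_of_tendsto_of_tendsto h1 h2 hev
    have hτT : τ = T := by
      by_contra hne
      have hlt : τ < T := lt_of_le_of_ne hτmem.2 hne
      have himp := key ε hε τ hτmem hτnn
      have hev : ∀ᶠ r in nhds τ, ∀ w, 0 < y r w + ε * Real.exp (K * r) := by
        rw [eventually_all]
        intro w
        have hc : ContinuousAt (fun r => y r w + ε * Real.exp (K * r)) τ := by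
          apply ContinuousAt.add
          · exact (hyderiv w τ hτmem).continuousAt
          · exact Continuous.continuousAt (by fun_prop)
        have hpos : 0 < y τ w + ε * Real.exp (K * τ) :=
          lt_of_lt_of_le hε (himp τ ⟨hτmem.1, le_rfl⟩ w)
        exact hc.tendsto.eventually (eventually_gt_nhds hpos)
      obtain ⟨δ, hδ0, hball⟩ := Metric.eventually_nhds_iff_ball.mp hev
      set t' := min (τ + δ / 2) T with ht'def
      have hτt' : τ < t' := lt_min (by linarith) hlt
      have ht'S : t' ∈ S := by
        refine ⟨⟨le_trans hτmem.1 hτt'.le, min_le_right _ _⟩, ?_⟩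
        intro s hs w
        rcases le_or_gt s τ with h1 | h1
        · exact hτnn s ⟨hs.1, h1⟩ w
        · have hdist : dist s τ < δ := by
            rw [Real.dist_eq, abs_of_pos (by linarith)]
            have : s ≤ τ + δ / 2 := hs.2.trans (min_le_left _ _)
            linarith
          have := hball s hdist w
          linarith
      exact absurd (le_csSup hbdd ht'S) (not_le.2 hτt')
    intro s hs w
    exact hτnn s (hτT ▸ hs) w
  -- conclude
  intro t ht v
  have hyt : 0 ≤ y t v := by
    by_contra h
    push_neg at h
    set ε : ℝ := -y t v / (2 * Real.exp (K * t)) with hεdef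
    have hε : 0 < ε := by
      apply div_pos (by linarith) (by positivity)
    have hmain := main ε hε t ht v
    have hεe : ε * Real.exp (K * t) = -y t v / 2 := by
      rw [hεdef]
      field_simp
    rw [hεe] at hmain
    linarith
  have hexp : 0 < Real.exp (C * t) := Real.exp_pos _
  by_contra h
  push_neg at h
  have : Real.exp (C * t) * x t v < 0 := mul_neg_of_pos_of_neg hexp h
  have hy' : y t v = Real.exp (C * t) * x t v := rfl
  linarith [hyt, hy' ▸ hyt]
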